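/- For any string S, FP(S)[i] equals the in-degree of node i in the DAG G(S) whose vertex set is {1,...,|S|} and which has an edge (j, i) whenever j = i - PD(S)[i] and PD(S)[i] > 0. -/

import Mathlib

open List

inductive Shape where
  | nil : Shape
  | node : Shape → Shape → Shape
deriving DecidableEq

inductive BTree (α : Type*) where
  | nil : BTree α
  | node : BTree α → α → BTree α → BTree α

def BTree.shape {α : Type*} : BTree α → Shape
  | .nil => .nil
  | .node l _ r => .node l.shape r.shape

def BTree.rootVal {α : Type*} : BTree α → Option α
  | .nil => none
  | .node _ v _ => some v

section
variable {α : Type*} [LinearOrder α] [Inhabited α]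

/-- Parent-distance value at 1-based position `i` of `S`. -/
def pdVal (S : List α) (i : ℕ) : ℕ :=
  let J := (Finset.Ico 1 i).filter (fun j => S.getD (j-1) default ≤ S.getD (i-1) default)
  if h : J.Nonempty then i - J.max' h else 0

/-- Parent-distance encoding of `S` (1-based positions). -/
def PD (S : List α) : List ℕ := (List.range S.length).map (fun k => pdVal S (k+1))

/-- 0-based index of the leftmost minimum of `S`. -/
def leftmostMinIdx (S : List α) : ℕ :=
  ((List.range S.length).argmin (fun j => S.getD j default)).getD 0

def CTaux : ℕ → List α → BTree α
  | 0, _ => .nil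
  | (n+1), S =>
    if S.isEmpty then .nil else
      let i := leftmostMinIdx S
      .node (CTaux n (S.take i)) (S.getD i default) (CTaux n (S.drop (i+1)))

/-- The (labeled) Cartesian tree of `S`. -/
def CT (S : List α) : BTree α := CTaux S.length S

/-- Front pointers of a sequence `u` of naturals (1-based positions `k ≥ 2` with `k - u[k] = 1`). -/
def frontPointers (u : List ℕ) : Finset ℕ :=
  (Finset.Icc 2 u.length).filter (fun k => k - u.getD (k-1) 0 = 1)

/-- `FP(S)[i]`: number of front pointers of `PD(S[i..])` (1-based `i`). -/
def FPval (S : List α) (i : ℕ) : ℕ := (frontPointers (PD (S.drop (i-1)))).card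

/-- The FP encoding of `S`. -/
def FP (S : List α) : List ℕ := (List.range S.length).map (fun k => FPval S (k+1))

end


section
variable {α : Type*} [LinearOrder α] [Inhabited α]

omit [LinearOrder α] [Inhabited α] in
lemma getD_drop' (S : List α) (n a : ℕ) (d : α) :
    (S.drop n).getD a d = S.getD (n + a) d := by
  simp [List.getD_eq_getElem?_getD, List.getElem?_drop]

lemma pd_cond (S : List α) (i m : ℕ) (h1 : 1 ≤ i) (hm : i < m) :
    (0 < pdVal S m ∧ m - pdVal S m = i) ↔
    (S.getD (i-1) default ≤ S.getD (m-1) default ∧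
      ∀ j, i < j → j < m → ¬ (S.getD (j-1) default ≤ S.getD (m-1) default)) := by
  unfold pdVal
  set J := (Finset.Ico 1 m).filter
      (fun j => S.getD (j-1) default ≤ S.getD (m-1) default) with hJ
  have hmem : ∀ j, j ∈ J ↔ (1 ≤ j ∧ j < m) ∧ S.getD (j-1) default ≤ S.getD (m-1) default := by
    intro j; simp [hJ, Finset.mem_filter, Finset.mem_Ico]
  by_cases h : J.Nonempty
  · simp only [dif_pos h]
    have hmax := J.max'_mem h
    rw [hmem] at hmax
    have hlt : J.max' h < m := hmax.1.2
    have h1m : 1 ≤ J.max' h := hmax.1.1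
    constructor
    · rintro ⟨hpos, heq⟩
      have : J.max' h = i := by omega
      have hiJ : i ∈ J := this ▸ J.max'_mem h
      rw [hmem] at hiJ
      refine ⟨hiJ.2, fun j hij hjm hP => ?_⟩
      have : j ∈ J := (hmem j).2 ⟨⟨by omega, hjm⟩, hP⟩
      have := J.le_max' j this
      omega
    · rintro ⟨hPi, hall⟩
      have hiJ : i ∈ J := (hmem i).2 ⟨⟨h1, hm⟩, hPi⟩
      have hle : J.max' h ≤ i := by
        by_contra hc
        push_neg at hc
        exact hall _ hc hlt hmax.2
      have hge : i ≤ J.max' h := J.le_max' i hiJ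
      omega
  · simp only [dif_neg h]
    constructor
    · rintro ⟨hpos, -⟩; omega
    · rintro ⟨hPi, -⟩
      exact absurd ⟨i, (hmem i).2 ⟨⟨h1, hm⟩, hPi⟩⟩ h

lemma pdVal_lt (S : List α) (m : ℕ) (h : 0 < pdVal S m) : pdVal S m < m := by
  unfold pdVal at h ⊢
  set J := (Finset.Ico 1 m).filter
      (fun j => S.getD (j-1) default ≤ S.getD (m-1) default) with hJ
  by_cases hne : J.Nonempty
  · simp only [dif_pos hne] at h ⊢
    have := Finset.mem_Ico.1 (Finset.mem_filter.1 (J.max'_mem hne)).1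
    omega
  · simp only [dif_neg hne] at h
    omega

lemma PD_getD (T : List α) (k : ℕ) (hk : 1 ≤ k) (h : k ≤ T.length) :
    (PD T).getD (k-1) 0 = pdVal T k := by
  have hlt : k - 1 < T.length := by omega
  have : k - 1 + 1 = k := by omega
  simp [PD, List.getD_eq_getElem?_getD, List.getElem?_range, hlt, this]

lemma key_iff (S : List α) (i k : ℕ) (h1 : 1 ≤ i) (hk2 : 2 ≤ k) :
    k - pdVal (S.drop (i-1)) k = 1 ↔
    (0 < pdVal S (k+(i-1)) ∧ (k+(i-1)) - pdVal S (k+(i-1)) = i) := by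
  have lhs : (k - pdVal (S.drop (i-1)) k = 1) ↔
      (0 < pdVal (S.drop (i-1)) k ∧ k - pdVal (S.drop (i-1)) k = 1) := by
    set p := pdVal (S.drop (i-1)) k; omega
  rw [lhs, pd_cond (S.drop (i-1)) 1 k le_rfl (by omega),
    pd_cond S i (k+(i-1)) h1 (by omega)]
  simp only [getD_drop']
  have e1 : i - 1 + (1 - 1) = i - 1 := by omega
  have e2 : i - 1 + (k - 1) = (k + (i-1)) - 1 := by omega
  rw [e1, e2]
  constructor
  · rintro ⟨hP, hall⟩
    refine ⟨hP, fun j hj hjm hPj => ?_⟩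
    have e3 : i - 1 + (j - (i-1) - 1) = j - 1 := by omega
    exact hall (j - (i-1)) (by omega) (by omega) (by rw [e3]; exact hPj)
  · rintro ⟨hP, hall⟩
    refine ⟨hP, fun j hj hjk hPj => ?_⟩
    refine hall (j + (i-1)) (by omega) (by omega) ?_
    have e4 : (j + (i-1)) - 1 = i - 1 + (j - 1) := by omega
    rw [e4]; exact hPj

end

/-- `FP(S)[i]` equals the in-degree of node `i` in the DAG `G(S)` with edges
`(i - PD(S)[i], i)` for `PD(S)[i] > 0`. -/
theorem stmt9 {α : Type*} [LinearOrder α] [Inhabited α] (S : List α) (i : ℕ)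
    (h1 : 1 ≤ i) (h2 : i ≤ S.length) :
    FPval S i =
      ((Finset.Icc 1 S.length).filter
        (fun k => 0 < pdVal S k ∧ k - pdVal S k = i)).card := by
  rw [FPval, frontPointers]
  have hTlen : (PD (S.drop (i-1))).length = S.length - (i-1) := by simp [PD]
  rw [hTlen]
  refine Finset.card_nbij' (fun k => k + (i-1)) (fun m => m - (i-1)) ?_ ?_ ?_ ?_
  · intro k hk
    simp only [Finset.mem_coe, Finset.mem_filter, Finset.mem_Icc] at hk ⊢
    obtain ⟨⟨hk2, hkl⟩, hcond⟩ := hk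
    rw [PD_getD _ k (by omega) (by simp; omega)] at hcond
    exact ⟨⟨by omega, by omega⟩, (key_iff S i k h1 hk2).1 hcond⟩
  · intro m hm
    simp only [Finset.mem_coe, Finset.mem_filter, Finset.mem_Icc] at hm ⊢
    obtain ⟨⟨hm1, hml⟩, hpos, heq⟩ := hm
    have him : i < m := by
      have := pdVal_lt S m hpos
      omega
    refine ⟨⟨by omega, by omega⟩, ?_⟩
    rw [PD_getD _ (m - (i-1)) (by omega) (by simp; omega)]
    have e : m - (i-1) + (i-1) = m := by omega
    exact (key_iff S i (m - (i-1)) h1 (by omega)).2 (by rw [e]; exact ⟨hpos, heq⟩)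
  · intro k hk
    simp only [Finset.mem_coe, Finset.mem_filter, Finset.mem_Icc] at hk
    show k + (i-1) - (i-1) = k
    omega
  · intro m hm
    simp only [Finset.mem_coe, Finset.mem_filter, Finset.mem_Icc] at hm
    obtain ⟨⟨hm1, hml⟩, hpos, heq⟩ := hm
    have him : i < m := by
      have := pdVal_lt S m hpos
      omega
    show m - (i-1) + (i-1) = m
    omega
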